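/- Let n ≥ 1 and fix A ∈ ℝⁿ. Suppose each x ∈ ℝⁿ is assigned a convex cone C_x ⊆ ℝⁿ, and suppose T : ℝⁿ → ℝ is continuously differentiable with dT_x(ξ) ≥ ‖ξ‖/(1 + ‖x − A‖) for every x ∈ ℝⁿ and every ξ ∈ C_x. Then every admissible Lipschitz loop is constant: if x : [0,1] → ℝⁿ is Lipschitz with ẋ(t) ∈ C_{x(t)} for almost every t and x(0) = x(1), then x(t) = x(0) for all t ∈ [0,1]. -/

import Mathlib

open MeasureTheory Set Filter Topology NNReal

section Aux

variable {E : Type*} [NormedAddCommGroup E] [NormedSpace ℝ E]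

/-- discrete difference quotients converge to the derivative -/
lemma seq_tendsto_slope {f : ℝ → E} {d : E} {t : ℝ} (h : HasDerivAt f d t) :
    Tendsto (fun n : ℕ => ((n : ℝ) + 1) • (f (t + 1 / ((n : ℝ) + 1)) - f t)) atTop (𝓝 d) := by
  have h1 : Tendsto (fun n : ℕ => t + 1 / ((n : ℝ) + 1)) atTop (𝓝[≠] t) := by
    apply tendsto_nhdsWithin_of_tendsto_nhds_of_eventually_within
    · have h0 := tendsto_one_div_add_atTop_nhds_zero_nat (𝕜 := ℝ)
      have := Tendsto.add (tendsto_const_nhds : Tendsto (fun _ : ℕ => t) atTop (𝓝 t)) h0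
      simpa using this
    · filter_upwards with n
      have hp : (0:ℝ) < 1 / ((n : ℝ) + 1) := by positivity
      simp only [mem_compl_iff, mem_singleton_iff]
      intro hc
      nlinarith [hc]
  have h2 := (hasDerivAt_iff_tendsto_slope.1 h).comp h1
  convert h2 using 2 with n
  have hp : (0:ℝ) < 1 / ((n : ℝ) + 1) := by positivity
  simp only [Function.comp_apply, slope_def_module]
  rw [show t + 1 / ((n : ℝ) + 1) - t = 1 / ((n : ℝ) + 1) by ring]
  rw [one_div, inv_inv]

lemma lipschitz_norm_deriv_le {K : ℝ≥0} {f : ℝ → E} (h : LipschitzWith K f) (t : ℝ) :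
    ‖deriv f t‖ ≤ K := by
  by_cases hd : DifferentiableAt ℝ f t
  · have hs := (seq_tendsto_slope hd.hasDerivAt).norm
    refine le_of_tendsto hs (Eventually.of_forall fun n => ?_)
    have hp : (0:ℝ) < 1 / ((n : ℝ) + 1) := by positivity
    have hb : ‖f (t + 1 / ((n : ℝ) + 1)) - f t‖ ≤ K * (1 / ((n : ℝ) + 1)) := by
      have := h.dist_le_mul (t + 1 / ((n : ℝ) + 1)) t
      simpa [dist_eq_norm, abs_of_pos (show (0:ℝ) < (n:ℝ)+1 by positivity)] using this
    rw [norm_smul]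
    have : |((n : ℝ) + 1)| = (n : ℝ) + 1 := abs_of_pos (by positivity)
    rw [Real.norm_eq_abs, this]
    calc ((n : ℝ) + 1) * ‖f (t + 1 / ((n : ℝ) + 1)) - f t‖
        ≤ ((n : ℝ) + 1) * ((K : ℝ) * (1 / ((n : ℝ) + 1))) := by
          exact mul_le_mul_of_nonneg_left hb (by positivity)
      _ = (K : ℝ) := by field_simp
  · simp [deriv_zero_of_not_differentiableAt hd, NNReal.coe_nonneg]

/-- Fundamental theorem of calculus for Lipschitz functions. -/
lemma lipschitz_ftc [CompleteSpace E] {K : ℝ≥0} {y : ℝ → E} (hy : LipschitzWith K y)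
    (hdiff : ∀ᵐ t : ℝ, DifferentiableAt ℝ y t) {a b : ℝ} (hab : a ≤ b) :
    ∫ t in a..b, deriv y t = y b - y a := by
  set F : ℕ → ℝ → E := fun n t => ((n : ℝ) + 1) • (y (t + 1 / ((n : ℝ) + 1)) - y t) with hF
  have hycont : Continuous y := hy.continuous
  have hFcont : ∀ n, Continuous (F n) := fun n =>
    continuous_const.smul ((hycont.comp (continuous_id.add continuous_const)).sub hycont)
  have hbound : ∀ n t, ‖F n t‖ ≤ (K : ℝ) := by
    intro n t
    have hb : ‖y (t + 1 / ((n : ℝ) + 1)) - y t‖ ≤ K * (1 / ((n : ℝ) + 1)) := by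
      have := hy.dist_le_mul (t + 1 / ((n : ℝ) + 1)) t
      simpa [dist_eq_norm, abs_of_pos (show (0:ℝ) < (n:ℝ)+1 by positivity)] using this
    rw [hF]
    simp only
    rw [norm_smul, Real.norm_eq_abs, abs_of_pos (by positivity : (0:ℝ) < (n:ℝ)+1)]
    calc ((n : ℝ) + 1) * ‖y (t + 1 / ((n : ℝ) + 1)) - y t‖
        ≤ ((n : ℝ) + 1) * ((K : ℝ) * (1 / ((n : ℝ) + 1))) :=
          mul_le_mul_of_nonneg_left hb (by positivity)
      _ = (K : ℝ) := by field_simp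
  -- limit 1 : by dominated convergence
  have hlim1 : Tendsto (fun n => ∫ t in Ioc a b, F n t) atTop
      (𝓝 (∫ t in Ioc a b, deriv y t)) := by
    apply MeasureTheory.tendsto_integral_of_dominated_convergence (fun _ => (K : ℝ))
    · exact fun n => (hFcont n).aestronglyMeasurable
    · exact integrableOn_const measure_Ioc_lt_top.ne
    · exact fun n => Eventually.of_forall fun t => hbound n t
    · refine ae_restrict_of_ae ?_
      filter_upwards [hdiff] with t ht
      exact seq_tendsto_slope ht.hasDerivAt
  -- limit 2 : by continuity of y and FTC-1
  have hyint : ∀ c d : ℝ, IntervalIntegrable y volume c d := fun c d =>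
    hycont.intervalIntegrable c d
  set Φ : ℝ → E := fun u => ∫ s in a..u, y s with hΦ
  have hΦder : ∀ u : ℝ, HasDerivAt Φ (y u) u := fun u =>
    intervalIntegral.integral_hasDerivAt_right (hyint a u)
      (hycont.stronglyMeasurableAtFilter _ _) hycont.continuousAt
  have hint_eq : ∀ n, ∫ t in a..b, F n t =
      (((n : ℝ) + 1) • (Φ (b + 1 / ((n : ℝ) + 1)) - Φ b)) -
      (((n : ℝ) + 1) • (Φ (a + 1 / ((n : ℝ) + 1)) - Φ a)) := by
    intro n
    set h : ℝ := 1 / ((n : ℝ) + 1) with hh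
    have hInt1 : IntervalIntegrable (fun t => y (t + h)) volume a b := by
      exact ((hycont.comp (continuous_id.add continuous_const)).intervalIntegrable a b)
    have h1 : ∫ t in a..b, F n t
        = ((n : ℝ) + 1) • ((∫ t in a..b, y (t + h)) - ∫ t in a..b, y t) := by
      rw [intervalIntegral.integral_smul]
      congr 1
      exact intervalIntegral.integral_sub hInt1 (hyint a b)
    rw [h1]
    have h2 : (∫ t in a..b, y (t + h)) = ∫ t in (a+h)..(b+h), y t :=
      intervalIntegral.integral_comp_add_right (a := a) (b := b) y h
    have h3 : (∫ t in (a+h)..(b+h), y t) = Φ (b + h) - Φ (a + h) := by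
      rw [hΦ]
      simp only
      rw [← intervalIntegral.integral_interval_sub_left (hyint a (b+h)) (hyint a (a+h))]
    have h4 : (∫ t in a..b, y t) = Φ b - Φ a := by
      rw [hΦ]
      simp only
      rw [← intervalIntegral.integral_interval_sub_left (hyint a b) (hyint a a)]
      simp
    rw [h2, h3, h4, ← smul_sub]
    congr 1
    abel
  have hlim2 : Tendsto (fun n => ∫ t in a..b, F n t) atTop (𝓝 (y b - y a)) := by
    have hB := seq_tendsto_slope (hΦder b)
    have hA := seq_tendsto_slope (hΦder a)
    have := hB.sub hA
    apply this.congr' (Eventually.of_forall fun n => (hint_eq n).symm)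
  have : (∫ t in a..b, deriv y t) = y b - y a := by
    have h5 : (∫ t in a..b, deriv y t) = ∫ t in Ioc a b, deriv y t :=
      intervalIntegral.integral_of_le hab
    have hlim1' : Tendsto (fun n => ∫ t in a..b, F n t) atTop
        (𝓝 (∫ t in a..b, deriv y t)) := by
      rw [h5]
      apply hlim1.congr fun n => (intervalIntegral.integral_of_le hab).symm
    exact tendsto_nhds_unique hlim1' hlim2
  exact this

end Aux

/-- If `T` is `C¹` with `dT_x ξ ≥ ‖ξ‖ / (1 + ‖x - A‖)` on the convex cones
`C x`, then every admissible Lipschitz loop is constant. -/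
theorem admissible_loops_are_constant
    (n : ℕ) (hn : 1 ≤ n) (A : EuclideanSpace ℝ (Fin n))
    (C : EuclideanSpace ℝ (Fin n) → Set (EuclideanSpace ℝ (Fin n)))
    (hC_convex : ∀ x, Convex ℝ (C x))
    (hC_zero : ∀ x, (0 : EuclideanSpace ℝ (Fin n)) ∈ C x)
    (hC_cone : ∀ x (l : ℝ) ξ, 0 ≤ l → ξ ∈ C x → l • ξ ∈ C x)
    (T : EuclideanSpace ℝ (Fin n) → ℝ) (hT : ContDiff ℝ 1 T)
    (hτ : ∀ x ξ, ξ ∈ C x → ‖ξ‖ / (1 + ‖x - A‖) ≤ fderiv ℝ T x ξ)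
    (x : ℝ → EuclideanSpace ℝ (Fin n))
    (hlip : ∃ K, LipschitzOnWith K x (Icc 0 1))
    (hadm : ∀ᵐ t ∂(volume.restrict (Icc (0:ℝ) 1)), deriv x t ∈ C (x t))
    (hloop : x 0 = x 1) :
    ∀ t ∈ Icc (0:ℝ) 1, x t = x 0 := by
  obtain ⟨K, hK⟩ := hlip
  -- the clamped path y, Lipschitz on all of ℝ and agreeing with x on Icc 0 1
  set y : ℝ → EuclideanSpace ℝ (Fin n) :=
    fun t => x (projIcc (0:ℝ) 1 zero_le_one t) with hy
  have hproj : LipschitzWith 1 (fun t : ℝ => (projIcc (0:ℝ) 1 zero_le_one t : ℝ)) := by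
    have := (LipschitzWith.subtype_val (Icc (0:ℝ) 1)).comp (LipschitzWith.projIcc zero_le_one)
    rw [one_mul] at this
    exact this
  have hylip : LipschitzWith (K * 1) y := by
    rw [← lipschitzOnWith_univ]
    exact hK.comp (hproj.lipschitzOnWith (s := univ)) (fun t _ => (projIcc 0 1 zero_le_one t).2)
  have hyx : ∀ t ∈ Icc (0:ℝ) 1, y t = x t := by
    intro t ht
    simp [hy, projIcc_of_mem zero_le_one ht]
  have hydiff : ∀ᵐ t : ℝ, DifferentiableAt ℝ y t := hylip.ae_differentiableAt_real
  -- y = x near points of Ioo 0 1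
  have hyx_nhds : ∀ t ∈ Ioo (0:ℝ) 1, y =ᶠ[nhds t] x := by
    intro t ht
    filter_upwards [Ioo_mem_nhds ht.1 ht.2] with s hs
    exact hyx s (Ioo_subset_Icc_self hs)
  -- a compact convex set containing the range of y
  have hKc : IsCompact (x '' Icc 0 1) := isCompact_Icc.image_of_continuousOn hK.continuousOn
  obtain ⟨R, hR⟩ := hKc.isBounded.subset_closedBall (x 0)
  set S : Set (EuclideanSpace ℝ (Fin n)) := Metric.closedBall (x 0) R with hS
  have hScompact : IsCompact S := isCompact_closedBall _ _
  have hSconv : Convex ℝ S := convex_closedBall _ _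
  have hyS : ∀ t, y t ∈ S := by
    intro t
    exact hR ⟨_, (projIcc 0 1 zero_le_one t).2, rfl⟩
  have hTdiff : Differentiable ℝ T := hT.differentiable one_ne_zero
  have hfdcont : Continuous (fderiv ℝ T) := hT.continuous_fderiv one_ne_zero
  obtain ⟨L, hL⟩ := hScompact.exists_bound_of_continuousOn (hfdcont.continuousOn (s := S))
  have hTlip : LipschitzOnWith L.toNNReal T S := by
    apply Convex.lipschitzOnWith_of_nnnorm_fderiv_le (fun z _ => hTdiff z) _ hSconv
    intro z hz
    rw [← NNReal.coe_le_coe, coe_nnnorm]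
    exact le_trans (hL z hz) (Real.le_coe_toNNReal L)
  -- g = T ∘ y is Lipschitz
  set g : ℝ → ℝ := fun t => T (y t) with hg
  have hglip : LipschitzWith (L.toNNReal * (K * 1)) g := by
    rw [← lipschitzOnWith_univ]
    exact hTlip.comp (hylip.lipschitzOnWith (s := univ)) (fun t _ => hyS t)
  have hgdiff : ∀ᵐ t : ℝ, DifferentiableAt ℝ g t := hglip.ae_differentiableAt_real
  -- a.e. facts on the restricted measure
  have hIoo : ∀ᵐ t ∂(volume.restrict (Icc (0:ℝ) 1)), t ∈ Ioo (0:ℝ) 1 := by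
    have h2 : ∀ᵐ t : ℝ, t ∉ ({0, 1} : Set ℝ) := by
      rw [← measure_eq_zero_iff_ae_notMem]
      exact Set.Finite.measure_zero (by simp) volume
    have h3 := ae_restrict_of_ae (μ := volume) (s := Icc (0:ℝ) 1) h2
    have h4 := ae_restrict_mem (μ := volume) (measurableSet_Icc (a := (0:ℝ)) (b := 1))
    filter_upwards [h3, h4] with t ht1 ht2
    rcases ht2.1.lt_or_eq with h | h
    · rcases ht2.2.lt_or_eq with h' | h'
      · exact ⟨h, h'⟩
      · exact absurd (by simp [h']) ht1
    · exact absurd (by simp [← h]) ht1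
  -- pointwise derivative facts a.e. on Icc 0 1
  have hkey : ∀ᵐ t ∂(volume.restrict (Icc (0:ℝ) 1)),
      deriv y t = deriv x t ∧ deriv y t ∈ C (x t) ∧
        deriv g t = fderiv ℝ T (x t) (deriv x t) := by
    filter_upwards [hIoo, hadm, ae_restrict_of_ae hydiff] with t ht hC hdy
    have hde : deriv y t = deriv x t := (hyx_nhds t ht).deriv_eq
    refine ⟨hde, hde ▸ hC, ?_⟩
    have hchain : HasDerivAt g (fderiv ℝ T (y t) (deriv y t)) t :=
      (hTdiff (y t)).hasFDerivAt.comp_hasDerivAt t hdy.hasDerivAt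
    rw [hchain.deriv, hde, hyx t (Ioo_subset_Icc_self ht)]
  -- deriv g is nonneg a.e. on [0,1]
  have hgnonneg : ∀ᵐ t ∂(volume.restrict (Icc (0:ℝ) 1)), 0 ≤ deriv g t := by
    filter_upwards [hkey, hadm] with t ⟨_, _, h3⟩ hC
    have := hτ (x t) (deriv x t) hC
    have hpos : 0 ≤ ‖deriv x t‖ / (1 + ‖x t - A‖) := by positivity
    linarith [h3 ▸ this]
  -- integrability of deriv g
  have hgderint : IntervalIntegrable (deriv g) volume 0 1 := by
    rw [intervalIntegrable_iff_integrableOn_Ioc_of_le zero_le_one]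
    refine ⟨(measurable_deriv g).aestronglyMeasurable.restrict, ?_⟩
    apply HasFiniteIntegral.of_bounded (C := ((L.toNNReal * (K * 1) : NNReal) : ℝ))
    exact Eventually.of_forall fun t => lipschitz_norm_deriv_le hglip t
  -- FTC for g : the integral of deriv g over [0,1] is 0
  have hgftc : ∫ t in (0:ℝ)..1, deriv g t = 0 := by
    rw [lipschitz_ftc hglip hgdiff zero_le_one]
    simp [hg, hyx 0 ⟨le_refl 0, zero_le_one⟩, hyx 1 ⟨zero_le_one, le_refl 1⟩, hloop]
  -- hence deriv g = 0 a.e., hence deriv y = 0 a.e. on Ioc 0 1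
  have hgzero : deriv g =ᵐ[volume.restrict (Ioc (0:ℝ) 1)] 0 := by
    have hnn : 0 ≤ᵐ[volume.restrict (Ioc (0:ℝ) 1 ∪ Ioc 1 0)] deriv g := by
      rw [show Ioc (0:ℝ) 1 ∪ Ioc 1 0 = Ioc 0 1 by simp]
      exact ae_restrict_of_ae_restrict_of_subset Ioc_subset_Icc_self hgnonneg
    have := (intervalIntegral.integral_eq_zero_iff_of_nonneg_ae hnn hgderint).1 hgftc
    rw [show Ioc (0:ℝ) 1 ∪ Ioc 1 0 = Ioc 0 1 by simp] at this
    exact this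
  have hyzero : ∀ᵐ t ∂(volume.restrict (Ioc (0:ℝ) 1)), deriv y t = 0 := by
    have hkey' := ae_restrict_of_ae_restrict_of_subset Ioc_subset_Icc_self hkey
    have hadm' := ae_restrict_of_ae_restrict_of_subset Ioc_subset_Icc_self hadm
    filter_upwards [hkey', hadm', hgzero] with t ⟨h1, _, h3⟩ hC h0
    have hτt := hτ (x t) (deriv x t) hC
    rw [← h3, h0, Pi.zero_apply] at hτt
    have hpos : 0 < 1 + ‖x t - A‖ := by positivity
    have : ‖deriv x t‖ ≤ 0 := by
      by_contra hcon
      push_neg at hcon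
      nlinarith [div_pos hcon hpos]
    rw [h1]
    exact norm_le_zero_iff.1 this
  -- conclude: for every s ∈ [0,1], x s = x 0
  intro s hs
  have hftc : ∫ t in (0:ℝ)..s, deriv y t = y s - y 0 := lipschitz_ftc hylip hydiff hs.1
  have hzero : ∫ t in (0:ℝ)..s, deriv y t = 0 := by
    rw [intervalIntegral.integral_of_le hs.1]
    apply integral_eq_zero_of_ae
    exact ae_restrict_of_ae_restrict_of_subset (Ioc_subset_Ioc_right hs.2) hyzero
  have : y s = y 0 := by
    have := hftc.symm.trans hzero
    rwa [sub_eq_zero] at this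
  rw [← hyx s hs, this, hyx 0 ⟨le_refl 0, zero_le_one⟩]
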